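/- The closure in ℝ of the set {λ_{m,n} : n ≥ 2, m ∈ ℤ³, m₁ ≥ 1, m₂ ≥ 1, m₃ = −m₁−m₂, m₃ ≥ 1−n} equals the interval [−1/2, 1]. -/

import Mathlib

/-- The eigenvalue `λ_{m,n}` for `m = (m₁, m₂, m₃) ∈ ℤ³` with `m₁+m₂+m₃ = 0`. -/
noncomputable def lamEig3 (n : ℕ) (m₁ m₂ m₃ : ℤ) : ℝ :=
  (1 / 3) * (Real.cos (2 * Real.pi * ((m₁ - m₂ : ℤ) : ℝ) / (3 * n)) +
    Real.cos (2 * Real.pi * ((m₂ - m₃ : ℤ) : ℝ) / (3 * n)) +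
    Real.cos (2 * Real.pi * ((m₃ - m₁ : ℤ) : ℝ) / (3 * n)))

section AuxLemmas
open Real


/-- Lipschitz bound for cosine. -/
lemma myAbsCos (a b : ℝ) : |Real.cos a - Real.cos b| ≤ |a - b| := by
  rw [Real.cos_sub_cos]
  have h1 : |Real.sin ((a+b)/2)| ≤ 1 := Real.abs_sin_le_one _
  have h2 : |Real.sin ((a-b)/2)| ≤ |(a-b)/2| := Real.abs_sin_le_abs
  have h3 : |(a-b)/2| = |a-b|/2 := by rw [abs_div]; norm_num
  have h4 : (0:ℝ) ≤ |Real.sin ((a+b)/2)| := abs_nonneg _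
  have h5 : (0:ℝ) ≤ |Real.sin ((a-b)/2)| := abs_nonneg _
  calc |(-2) * Real.sin ((a+b)/2) * Real.sin ((a-b)/2)|
      = 2 * |Real.sin ((a+b)/2)| * |Real.sin ((a-b)/2)| := by
        rw [abs_mul, abs_mul]; norm_num
    _ ≤ |a - b| := by rw [h3] at h2; nlinarith

lemma myBounds (a b : ℝ) :
    -(1/2) ≤ (1/3 : ℝ) * (Real.cos a + Real.cos b + Real.cos (a+b)) ∧
    (1/3 : ℝ) * (Real.cos a + Real.cos b + Real.cos (a+b)) ≤ 1 := by
  have h := Real.cos_add a b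
  have h1 := Real.sin_sq_add_cos_sq a
  have h2 := Real.sin_sq_add_cos_sq b
  constructor
  · nlinarith [sq_nonneg (Real.cos a + Real.cos b + 1), sq_nonneg (Real.sin a - Real.sin b)]
  · nlinarith [Real.cos_le_one a, Real.cos_le_one b, Real.cos_le_one (a+b)]

lemma myCos23 : Real.cos (2*π/3) = -(1/2) := by
  have h : (2*π/3 : ℝ) = π - π/3 := by ring
  rw [h, Real.cos_pi_sub, Real.cos_pi_div_three]

lemma myCos43 : Real.cos (4*π/3) = -(1/2) := by
  have h : (4*π/3 : ℝ) = π/3 + π := by ring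
  rw [h, Real.cos_add_pi, Real.cos_pi_div_three]

noncomputable def Ffun : ℝ → ℝ := fun t =>
  (1/3 : ℝ) * (Real.cos (2*π*(-t)/3) + Real.cos (2*π*(2*t)/3) + Real.cos (2*π*(-t)/3))

lemma Ffun_cont : Continuous Ffun := by unfold Ffun; fun_prop

lemma Ffun_zero : Ffun 0 = 1 := by unfold Ffun; norm_num

lemma Ffun_one : Ffun 1 = -(1/2) := by
  unfold Ffun
  have h1 : (2*π*(-1:ℝ)/3) = -(2*π/3) := by ring
  have h2 : (2*π*(2*(1:ℝ))/3) = 4*π/3 := by ring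
  rw [h1, h2, Real.cos_neg, myCos23, myCos43]
  norm_num

/-- The closure of the set of eigenvalues
`λ_{m,n}` with `n ≥ 2`, `m₁, m₂ ≥ 1`, `m₃ = −m₁−m₂ ≥ 1−n` equals `[−1/2, 1]`. -/
theorem closure_lamEig_eq_Icc :
    closure {x : ℝ | ∃ n : ℕ, 2 ≤ n ∧ ∃ m₁ m₂ : ℤ, 1 ≤ m₁ ∧ 1 ≤ m₂ ∧
        1 - (n : ℤ) ≤ -m₁ - m₂ ∧ x = lamEig3 n m₁ m₂ (-m₁ - m₂)} =
      Set.Icc (-(1 / 2) : ℝ) 1 := by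
  apply le_antisymm
  · apply closure_minimal _ isClosed_Icc
    rintro x ⟨n, hn, m₁, m₂, h1, h2, h3, rfl⟩
    set a : ℝ := 2*π*((m₁ - m₂ : ℤ):ℝ)/(3*(n:ℝ)) with ha
    set b : ℝ := 2*π*((m₂ - (-m₁ - m₂) : ℤ):ℝ)/(3*(n:ℝ)) with hb
    have hc : 2*π*(((-m₁ - m₂) - m₁ : ℤ):ℝ)/(3*(n:ℝ)) = -(a+b) := by
      rw [ha, hb]; push_cast; ring
    have hrw : lamEig3 n m₁ m₂ (-m₁ - m₂)
        = (1/3 : ℝ) * (Real.cos a + Real.cos b + Real.cos (a+b)) := by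
      unfold lamEig3
      rw [hc, Real.cos_neg]
    rw [hrw]
    exact ⟨(myBounds a b).1, (myBounds a b).2⟩
  · intro x hx
    have hsub : Set.Icc (-(1/2) : ℝ) 1 ⊆ Ffun '' Set.Icc 0 1 := by
      have := intermediate_value_Icc' (by norm_num : (0:ℝ) ≤ 1) Ffun_cont.continuousOn
      rw [Ffun_zero, Ffun_one] at this
      exact this
    obtain ⟨t, ht, hFt⟩ := hsub hx
    obtain ⟨ht0, ht1⟩ := ht
    rw [Metric.mem_closure_iff]
    intro ε hε
    obtain ⟨N, hN⟩ := exists_nat_gt (14/ε)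
    set n : ℕ := N + 3 with hn
    have hn3 : (3:ℕ) ≤ n := by omega
    have hn0 : (0:ℝ) < (n:ℝ) := by positivity
    have hnN : (14/ε : ℝ) < (n:ℝ) := by
      calc (14/ε : ℝ) < N := hN
        _ ≤ (n:ℝ) := by rw [hn]; push_cast; linarith
    have hεn : 14/(n:ℝ) < ε := by
      rw [div_lt_iff₀ hn0]
      rw [div_lt_iff₀ hε] at hnN
      linarith
    set f : ℤ := ⌊t * (n:ℝ)⌋ with hf
    set k : ℤ := max 1 (min ((n:ℤ) - 2) f) with hk
    have htn0 : (0:ℝ) ≤ t * (n:ℝ) := by positivity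
    have htnn : t * (n:ℝ) ≤ (n:ℝ) := by nlinarith
    have hf0 : 0 ≤ f := Int.le_floor.mpr (by exact_mod_cast htn0)
    have hfle : (f:ℝ) ≤ t * (n:ℝ) := Int.floor_le _
    have hflt : t * (n:ℝ) - 1 < (f:ℝ) := Int.sub_one_lt_floor _
    have hk1 : 1 ≤ k := le_max_left _ _
    have hkn : k ≤ (n:ℤ) - 2 := by
      apply max_le
      · omega
      · exact min_le_left _ _
    -- real bounds on k
    have hkhi : (k:ℝ) ≤ t * (n:ℝ) + 1 := by
      have h1 : k ≤ f + 1 := by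
        apply max_le
        · omega
        · have := min_le_right ((n:ℤ) - 2) f; omega
      have : (k:ℝ) ≤ (f:ℝ) + 1 := by exact_mod_cast h1
      linarith
    have hklo : t * (n:ℝ) - 2 ≤ (k:ℝ) := by
      have h1 : min ((n:ℤ) - 2) f ≤ k := le_max_right _ _
      have h2 : ((min ((n:ℤ) - 2) f : ℤ):ℝ) = min ((n:ℝ) - 2) (f:ℝ) := by
        push_cast [Int.cast_min]; norm_num
      have h3 : ((min ((n:ℤ) - 2) f : ℤ):ℝ) ≤ (k:ℝ) := by exact_mod_cast h1
      rw [h2] at h3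
      have h4 : t * (n:ℝ) - 2 ≤ min ((n:ℝ) - 2) (f:ℝ) := by
        apply le_min
        · linarith
        · linarith
      linarith
    -- the candidate element
    refine ⟨lamEig3 n 1 k (-1 - k), ⟨n, by omega, 1, k, le_refl 1, hk1, by omega, rfl⟩, ?_⟩
    -- rewrite lamEig3
    have hlam : lamEig3 n 1 k (-1 - k)
        = (1/3 : ℝ) * (Real.cos (2*π*(1 - (k:ℝ))/(3*(n:ℝ)))
          + Real.cos (2*π*(2*(k:ℝ)+1)/(3*(n:ℝ)))
          + Real.cos (2*π*(-2-(k:ℝ))/(3*(n:ℝ)))) := by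
      unfold lamEig3
      rw [show ((1 - k : ℤ):ℝ) = 1 - (k:ℝ) by push_cast; ring,
        show ((k - (-1 - k) : ℤ):ℝ) = 2*(k:ℝ)+1 by push_cast; ring,
        show (((-1 - k) - 1 : ℤ):ℝ) = -2-(k:ℝ) by push_cast; ring]
    rw [Real.dist_eq, ← hFt, hlam]
    -- bound the three cosine differences
    have hne : (n:ℝ) ≠ 0 := ne_of_gt hn0
    have key : ∀ A B : ℝ, B - A = 2*π/(3*(n:ℝ)) * (B - A) / (2*π/(3*(n:ℝ))) → True := fun _ _ _ => trivial
    have habs : ∀ c : ℝ, |c| ≤ 5 → |2*π/(3*(n:ℝ)) * c| ≤ 14/(n:ℝ) := by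
      intro c hc
      rw [abs_mul, abs_of_nonneg (by positivity : (0:ℝ) ≤ 2*π/(3*(n:ℝ)))]
      rw [div_mul_eq_mul_div, div_le_div_iff₀ (by positivity) hn0]
      have hπ : π ≤ 4 := Real.pi_le_four
      have hπ0 : 0 < π := Real.pi_pos
      have h0c : 0 ≤ |c| := abs_nonneg c
      nlinarith [mul_le_mul hπ hc h0c (by norm_num : (0:ℝ) ≤ 4)]
    have d1 : 2*π*(-t)/3 - 2*π*(1 - (k:ℝ))/(3*(n:ℝ))
        = 2*π/(3*(n:ℝ)) * ((k:ℝ) - t*(n:ℝ) - 1) := by field_simp; ring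
    have d2 : 2*π*(2*t)/3 - 2*π*(2*(k:ℝ)+1)/(3*(n:ℝ))
        = 2*π/(3*(n:ℝ)) * (2*(t*(n:ℝ)) - 2*(k:ℝ) - 1) := by field_simp; ring
    have d3 : 2*π*(-t)/3 - 2*π*(-2-(k:ℝ))/(3*(n:ℝ))
        = 2*π/(3*(n:ℝ)) * ((k:ℝ) + 2 - t*(n:ℝ)) := by field_simp; ring
    have c1 : |Real.cos (2*π*(-t)/3) - Real.cos (2*π*(1 - (k:ℝ))/(3*(n:ℝ)))| ≤ 14/(n:ℝ) := by
      refine le_trans (myAbsCos _ _) ?_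
      rw [d1]
      exact habs _ (abs_le.mpr ⟨by linarith, by linarith⟩)
    have c2 : |Real.cos (2*π*(2*t)/3) - Real.cos (2*π*(2*(k:ℝ)+1)/(3*(n:ℝ)))| ≤ 14/(n:ℝ) := by
      refine le_trans (myAbsCos _ _) ?_
      rw [d2]
      exact habs _ (abs_le.mpr ⟨by linarith, by linarith⟩)
    have c3 : |Real.cos (2*π*(-t)/3) - Real.cos (2*π*(-2-(k:ℝ))/(3*(n:ℝ)))| ≤ 14/(n:ℝ) := by
      refine le_trans (myAbsCos _ _) ?_
      rw [d3]
      exact habs _ (abs_le.mpr ⟨by linarith, by linarith⟩)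
    have : |Ffun t - (1/3 : ℝ) * (Real.cos (2*π*(1 - (k:ℝ))/(3*(n:ℝ)))
          + Real.cos (2*π*(2*(k:ℝ)+1)/(3*(n:ℝ)))
          + Real.cos (2*π*(-2-(k:ℝ))/(3*(n:ℝ))))| ≤ 14/(n:ℝ) := by
      unfold Ffun
      have hexp : (1/3 : ℝ) * (Real.cos (2*π*(-t)/3) + Real.cos (2*π*(2*t)/3) + Real.cos (2*π*(-t)/3))
          - (1/3 : ℝ) * (Real.cos (2*π*(1 - (k:ℝ))/(3*(n:ℝ)))
          + Real.cos (2*π*(2*(k:ℝ)+1)/(3*(n:ℝ)))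
          + Real.cos (2*π*(-2-(k:ℝ))/(3*(n:ℝ))))
          = (1/3 : ℝ) * ((Real.cos (2*π*(-t)/3) - Real.cos (2*π*(1 - (k:ℝ))/(3*(n:ℝ))))
            + (Real.cos (2*π*(2*t)/3) - Real.cos (2*π*(2*(k:ℝ)+1)/(3*(n:ℝ))))
            + (Real.cos (2*π*(-t)/3) - Real.cos (2*π*(-2-(k:ℝ))/(3*(n:ℝ))))) := by ring
      rw [hexp]
      rw [abs_mul]
      have := abs_add_le (Real.cos (2*π*(-t)/3) - Real.cos (2*π*(1 - (k:ℝ))/(3*(n:ℝ)))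
          + (Real.cos (2*π*(2*t)/3) - Real.cos (2*π*(2*(k:ℝ)+1)/(3*(n:ℝ)))))
          (Real.cos (2*π*(-t)/3) - Real.cos (2*π*(-2-(k:ℝ))/(3*(n:ℝ))))
      have h2 := abs_add_le (Real.cos (2*π*(-t)/3) - Real.cos (2*π*(1 - (k:ℝ))/(3*(n:ℝ))))
          (Real.cos (2*π*(2*t)/3) - Real.cos (2*π*(2*(k:ℝ)+1)/(3*(n:ℝ))))
      have habs3 : |(1/3 : ℝ)| = 1/3 := by norm_num
      rw [habs3]
      linarith [this, h2, c1, c2, c3]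
    exact lt_of_le_of_lt this hεn

end AuxLemmas
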